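/- Let ℱ be the collection of all maximally evident C-indicating events of Ω (events that are the maximally evident C-indicating superset of some nonempty event). Then ℱ is a finite collection that can be enumerated as a strictly nested chain E₁ ⊃ E₂ ⊃ ... ⊃ E_n whose C-evidence levels are strictly increasing, and for every index i > 1, E_i is the largest super-evident C-indicating subset of E_{i−1}. -/
import Mathlib


open Finset

variable {Ω : Type*}

/-- The conditional probability `P_i(E | ω) = μ(E ∩ Π_i(ω)) / μ(Π_i(ω))`,
where `part i ω` is the cell of player `i`'s information partition containing `ω`. -/
noncomputable def condP [Fintype Ω] [DecidableEq Ω] (μ : Ω → ℝ)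
    (part : Fin 2 → Ω → Finset Ω) (i : Fin 2) (E : Finset Ω) (ω : Ω) : ℝ :=
  (∑ x ∈ E ∩ part i ω, μ x) / (∑ x ∈ part i ω, μ x)

/-- `E` is `p`-evident: every player `p`-believes `E` at every state of `E`. -/
def pEvident [Fintype Ω] [DecidableEq Ω] (μ : Ω → ℝ)
    (part : Fin 2 → Ω → Finset Ω) (p : ℝ) (E : Finset Ω) : Prop :=
  ∀ i : Fin 2, ∀ ω ∈ E, p ≤ condP μ part i E ω

/-- `E` is a `p`-evident `C`-indicating event. -/
def pEvidentInd [Fintype Ω] [DecidableEq Ω] (μ : Ω → ℝ)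
    (part : Fin 2 → Ω → Finset Ω) (p : ℝ) (C E : Finset Ω) : Prop :=
  pEvident μ part p E ∧ ∀ i : Fin 2, ∀ ω ∈ E, p ≤ condP μ part i C ω

/-- `E` is the largest `p`-evident `C`-indicating event. -/
def isLargestInd [Fintype Ω] [DecidableEq Ω] (μ : Ω → ℝ)
    (part : Fin 2 → Ω → Finset Ω) (p : ℝ) (C E : Finset Ω) : Prop :=
  pEvidentInd μ part p C E ∧ ∀ F : Finset Ω, pEvidentInd μ part p C F → F ⊆ E

/-- `p` is the `C`-evidence level of `E`: the maximum `q` for which `E` is a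
`q`-evident `C`-indicating event. -/
def isEvidenceLevel [Fintype Ω] [DecidableEq Ω] (μ : Ω → ℝ)
    (part : Fin 2 → Ω → Finset Ω) (C E : Finset Ω) (p : ℝ) : Prop :=
  IsGreatest {q : ℝ | pEvidentInd μ part q C E} p

/-- `G` is the maximally evident `C`-indicating superset of `F`. -/
def isMaxEvidentSup [Fintype Ω] [DecidableEq Ω] (μ : Ω → ℝ)
    (part : Fin 2 → Ω → Finset Ω) (C F G : Finset Ω) : Prop :=
  F ⊆ G ∧ ∃ p : ℝ, isEvidenceLevel μ part C G p ∧ isLargestInd μ part p C G ∧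
    ∀ H : Finset Ω, F ⊆ H → ∀ q : ℝ, isEvidenceLevel μ part C H q → q ≤ p

/-- `E` is a maximally evident `C`-indicating event: it is the maximally evident
`C`-indicating superset of some nonempty event. -/
def isMaxEvident [Fintype Ω] [DecidableEq Ω] (μ : Ω → ℝ)
    (part : Fin 2 → Ω → Finset Ω) (C E : Finset Ω) : Prop :=
  ∃ F : Finset Ω, F.Nonempty ∧ isMaxEvidentSup μ part C F E

/-- `E` is a super-`p`-evident `C`-indicating event. -/
def superEvidentInd [Fintype Ω] [DecidableEq Ω] (μ : Ω → ℝ)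
    (part : Fin 2 → Ω → Finset Ω) (p : ℝ) (C E : Finset Ω) : Prop :=
  ∀ i : Fin 2, ∀ ω ∈ E, p < condP μ part i E ω ∧ p < condP μ part i C ω

/-- `E` is the largest super-evident `C`-indicating subset of `F`. -/
def isLargestSuperSub [Fintype Ω] [DecidableEq Ω] (μ : Ω → ℝ)
    (part : Fin 2 → Ω → Finset Ω) (C F E : Finset Ω) : Prop :=
  E ⊆ F ∧ ∃ p : ℝ, isEvidenceLevel μ part C F p ∧ superEvidentInd μ part p C E ∧
    ∀ G : Finset Ω, G ⊆ F → superEvidentInd μ part p C G → G ⊆ E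

section Aux

variable [Fintype Ω] [DecidableEq Ω]

lemma denom_pos (μ : Ω → ℝ) (part : Fin 2 → Ω → Finset Ω)
    (hμpos : ∀ ω : Ω, 0 < μ ω) (hmem : ∀ (i : Fin 2) (ω : Ω), ω ∈ part i ω)
    (i : Fin 2) (ω : Ω) : 0 < ∑ x ∈ part i ω, μ x :=
  Finset.sum_pos (fun x _ => hμpos x) ⟨ω, hmem i ω⟩

lemma condP_mono (μ : Ω → ℝ) (part : Fin 2 → Ω → Finset Ω)
    (hμpos : ∀ ω : Ω, 0 < μ ω) (hmem : ∀ (i : Fin 2) (ω : Ω), ω ∈ part i ω)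
    {E F : Finset Ω} (h : E ⊆ F) (i : Fin 2) (ω : Ω) :
    condP μ part i E ω ≤ condP μ part i F ω := by
  unfold condP
  have hd := denom_pos μ part hμpos hmem i ω
  have hnum : (∑ x ∈ E ∩ part i ω, μ x) ≤ ∑ x ∈ F ∩ part i ω, μ x :=
    Finset.sum_le_sum_of_subset_of_nonneg
      (Finset.inter_subset_inter h (Finset.Subset.refl _))
      (fun x _ _ => (hμpos x).le)
  exact div_le_div_of_nonneg_right hnum hd.le |>.trans_eq rfl

/-- The `C`-evidence level of a nonempty event `E`. -/
noncomputable def lev (μ : Ω → ℝ) (part : Fin 2 → Ω → Finset Ω)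
    (C E : Finset Ω) : ℝ :=
  if h : (E ×ˢ (univ : Finset (Fin 2))).Nonempty then
    (E ×ˢ univ).inf' h (fun x => min (condP μ part x.2 E x.1) (condP μ part x.2 C x.1))
  else 0

lemma lev_def (μ : Ω → ℝ) (part : Fin 2 → Ω → Finset Ω) (C : Finset Ω)
    {E : Finset Ω} (hE : E.Nonempty) :
    lev μ part C E = (E ×ˢ univ).inf' (hE.product Finset.univ_nonempty)
      (fun x => min (condP μ part x.2 E x.1) (condP μ part x.2 C x.1)) :=
  dif_pos _

lemma pEvidentInd_iff_le_lev {μ : Ω → ℝ} {part : Fin 2 → Ω → Finset Ω}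
    {C E : Finset Ω} (hE : E.Nonempty) {q : ℝ} :
    pEvidentInd μ part q C E ↔ q ≤ lev μ part C E := by
  rw [lev_def μ part C hE, Finset.le_inf'_iff]
  constructor
  · rintro ⟨h1, h2⟩ ⟨ω, i⟩ hx
    rw [Finset.mem_product] at hx
    exact le_min (h1 i ω hx.1) (h2 i ω hx.1)
  · intro h
    constructor
    · intro i ω hω
      exact (h (ω, i) (Finset.mem_product.mpr ⟨hω, Finset.mem_univ i⟩)).trans (min_le_left _ _)
    · intro i ω hω
      exact (h (ω, i) (Finset.mem_product.mpr ⟨hω, Finset.mem_univ i⟩)).trans (min_le_right _ _)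

lemma isEvidenceLevel_lev {μ : Ω → ℝ} {part : Fin 2 → Ω → Finset Ω}
    {C E : Finset Ω} (hE : E.Nonempty) :
    isEvidenceLevel μ part C E (lev μ part C E) :=
  ⟨(pEvidentInd_iff_le_lev hE).mpr le_rfl,
   fun _ hq => (pEvidentInd_iff_le_lev hE).mp hq⟩

lemma nonempty_of_isEvidenceLevel {μ : Ω → ℝ} {part : Fin 2 → Ω → Finset Ω}
    {C E : Finset Ω} {p : ℝ} (h : isEvidenceLevel μ part C E p) : E.Nonempty := by
  rcases E.eq_empty_or_nonempty with rfl | hE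
  · exfalso
    have h1 : pEvidentInd μ part (p + 1) C (∅ : Finset Ω) :=
      ⟨fun i ω hω => by simp at hω, fun i ω hω => by simp at hω⟩
    have := h.2 h1
    linarith
  · exact hE

lemma eq_lev_of_isEvidenceLevel {μ : Ω → ℝ} {part : Fin 2 → Ω → Finset Ω}
    {C E : Finset Ω} {p : ℝ} (h : isEvidenceLevel μ part C E p) :
    p = lev μ part C E :=
  h.unique (isEvidenceLevel_lev (nonempty_of_isEvidenceLevel h))

open Classical in
/-- The largest `p`-evident `C`-indicating event. -/
noncomputable def bigE (μ : Ω → ℝ) (part : Fin 2 → Ω → Finset Ω)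
    (p : ℝ) (C : Finset Ω) : Finset Ω :=
  univ.filter (fun ω => ∃ E : Finset Ω, pEvidentInd μ part p C E ∧ ω ∈ E)

lemma subset_bigE {μ : Ω → ℝ} {part : Fin 2 → Ω → Finset Ω}
    {p : ℝ} {C F : Finset Ω} (h : pEvidentInd μ part p C F) :
    F ⊆ bigE μ part p C := by
  intro ω hω
  simp only [bigE, Finset.mem_filter, Finset.mem_univ, true_and]
  exact ⟨F, h, hω⟩

lemma bigE_pEvidentInd (μ : Ω → ℝ) (part : Fin 2 → Ω → Finset Ω)
    (hμpos : ∀ ω : Ω, 0 < μ ω) (hmem : ∀ (i : Fin 2) (ω : Ω), ω ∈ part i ω)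
    (p : ℝ) (C : Finset Ω) : pEvidentInd μ part p C (bigE μ part p C) := by
  constructor
  · intro i ω hω
    simp only [bigE, Finset.mem_filter, Finset.mem_univ, true_and] at hω
    obtain ⟨E, hE, hωE⟩ := hω
    exact (hE.1 i ω hωE).trans (condP_mono μ part hμpos hmem (subset_bigE hE) i ω)
  · intro i ω hω
    simp only [bigE, Finset.mem_filter, Finset.mem_univ, true_and] at hω
    obtain ⟨E, hE, hωE⟩ := hω
    exact hE.2 i ω hωE

lemma isLargestInd_bigE (μ : Ω → ℝ) (part : Fin 2 → Ω → Finset Ω)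
    (hμpos : ∀ ω : Ω, 0 < μ ω) (hmem : ∀ (i : Fin 2) (ω : Ω), ω ∈ part i ω)
    (p : ℝ) (C : Finset Ω) : isLargestInd μ part p C (bigE μ part p C) :=
  ⟨bigE_pEvidentInd μ part hμpos hmem p C, fun _ hF => subset_bigE hF⟩

lemma exists_maxEvidentSup (μ : Ω → ℝ) (part : Fin 2 → Ω → Finset Ω)
    (hμpos : ∀ ω : Ω, 0 < μ ω) (hmem : ∀ (i : Fin 2) (ω : Ω), ω ∈ part i ω)
    (C : Finset Ω) {F : Finset Ω} (hF : F.Nonempty) :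
    ∃ G : Finset Ω, isMaxEvidentSup μ part C F G ∧
      lev μ part C F ≤ lev μ part C G := by
  classical
  set P : Finset (Finset Ω) := univ.powerset.filter (fun H => F ⊆ H) with hPdef
  have hFP : F ∈ P := by simp [hPdef]
  have hPmem : ∀ H : Finset Ω, F ⊆ H → H ∈ P := fun H h => by simp [hPdef, h]
  have hPne : P.Nonempty := ⟨F, hFP⟩
  set pstar : ℝ := P.sup' hPne (lev μ part C) with hpstar
  obtain ⟨H₀, hH₀P, hH₀⟩ := Finset.exists_mem_eq_sup' hPne (lev μ part C)
  have hFH₀ : F ⊆ H₀ := by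
    simp only [hPdef, Finset.mem_filter] at hH₀P; exact hH₀P.2
  have hH₀ne : H₀.Nonempty := hF.mono hFH₀
  have hH₀p : pEvidentInd μ part pstar C H₀ :=
    (pEvidentInd_iff_le_lev hH₀ne).mpr (le_of_eq hH₀)
  set G := bigE μ part pstar C with hGdef
  have hH₀G : H₀ ⊆ G := subset_bigE hH₀p
  have hGne : G.Nonempty := hH₀ne.mono hH₀G
  have hFG : F ⊆ G := hFH₀.trans hH₀G
  have hlevG : lev μ part C G = pstar := by
    apply le_antisymm
    · exact Finset.le_sup' (lev μ part C) (hPmem G hFG)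
    · exact (pEvidentInd_iff_le_lev hGne).mp (bigE_pEvidentInd μ part hμpos hmem pstar C)
  refine ⟨G, ⟨hFG, pstar, ?_, isLargestInd_bigE μ part hμpos hmem pstar C, ?_⟩, ?_⟩
  · rw [← hlevG]; exact isEvidenceLevel_lev hGne
  · intro H hFH q hq
    rw [eq_lev_of_isEvidenceLevel hq]
    exact Finset.le_sup' (lev μ part C) (hPmem H hFH)
  · rw [hlevG]
    exact Finset.le_sup' (lev μ part C) hFP

lemma maxEvident_nonempty {μ : Ω → ℝ} {part : Fin 2 → Ω → Finset Ω}
    {C E : Finset Ω} (h : isMaxEvident μ part C E) : E.Nonempty := by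
  obtain ⟨F, hF, hFE, p, hp, _⟩ := h
  exact nonempty_of_isEvidenceLevel hp

lemma maxEvident_eq_bigE {μ : Ω → ℝ} {part : Fin 2 → Ω → Finset Ω}
    (hμpos : ∀ ω : Ω, 0 < μ ω) (hmem : ∀ (i : Fin 2) (ω : Ω), ω ∈ part i ω)
    {C E : Finset Ω} (h : isMaxEvident μ part C E) :
    E = bigE μ part (lev μ part C E) C := by
  obtain ⟨F, hF, hFE, p, hp, hLar, hmax⟩ := h
  have hpe : p = lev μ part C E := eq_lev_of_isEvidenceLevel hp
  subst hpe
  exact Finset.Subset.antisymm (subset_bigE hp.1)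
    (hLar.2 _ (bigE_pEvidentInd μ part hμpos hmem _ C))

lemma maxEvident_subset {μ : Ω → ℝ} {part : Fin 2 → Ω → Finset Ω}
    (hμpos : ∀ ω : Ω, 0 < μ ω) (hmem : ∀ (i : Fin 2) (ω : Ω), ω ∈ part i ω)
    {C A B : Finset Ω} (hA : isMaxEvident μ part C A) (hB : isMaxEvident μ part C B)
    (h : lev μ part C A ≤ lev μ part C B) : B ⊆ A := by
  have hBp : pEvidentInd μ part (lev μ part C A) C B :=
    (pEvidentInd_iff_le_lev (maxEvident_nonempty hB)).mpr h
  rw [maxEvident_eq_bigE hμpos hmem hA]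
  exact subset_bigE hBp

lemma maxEvident_total {μ : Ω → ℝ} {part : Fin 2 → Ω → Finset Ω}
    (hμpos : ∀ ω : Ω, 0 < μ ω) (hmem : ∀ (i : Fin 2) (ω : Ω), ω ∈ part i ω)
    {C A B : Finset Ω} (hA : isMaxEvident μ part C A) (hB : isMaxEvident μ part C B) :
    A ⊆ B ∨ B ⊆ A := by
  rcases le_total (lev μ part C A) (lev μ part C B) with h | h
  · exact Or.inr (maxEvident_subset hμpos hmem hA hB h)
  · exact Or.inl (maxEvident_subset hμpos hmem hB hA h)

lemma maxEvident_card_inj {μ : Ω → ℝ} {part : Fin 2 → Ω → Finset Ω}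
    (hμpos : ∀ ω : Ω, 0 < μ ω) (hmem : ∀ (i : Fin 2) (ω : Ω), ω ∈ part i ω)
    {C A B : Finset Ω} (hA : isMaxEvident μ part C A) (hB : isMaxEvident μ part C B)
    (h : A.card = B.card) : A = B := by
  rcases maxEvident_total hμpos hmem hA hB with hs | hs
  · exact Finset.eq_of_subset_of_card_le hs h.ge
  · exact (Finset.eq_of_subset_of_card_le hs h.le).symm

lemma maxEvident_ssubset_of_card_lt {μ : Ω → ℝ} {part : Fin 2 → Ω → Finset Ω}
    (hμpos : ∀ ω : Ω, 0 < μ ω) (hmem : ∀ (i : Fin 2) (ω : Ω), ω ∈ part i ω)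
    {C A B : Finset Ω} (hA : isMaxEvident μ part C A) (hB : isMaxEvident μ part C B)
    (h : A.card < B.card) : A ⊂ B := by
  rcases maxEvident_total hμpos hmem hA hB with hs | hs
  · exact lt_of_le_of_ne hs (fun hEq => by simp [hEq] at h)
  · exact absurd (Finset.card_le_card hs) (by omega)

lemma maxEvident_lev_lt_of_ssubset {μ : Ω → ℝ} {part : Fin 2 → Ω → Finset Ω}
    (hμpos : ∀ ω : Ω, 0 < μ ω) (hmem : ∀ (i : Fin 2) (ω : Ω), ω ∈ part i ω)
    {C A B : Finset Ω} (hA : isMaxEvident μ part C A) (hB : isMaxEvident μ part C B)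
    (h : A ⊂ B) : lev μ part C B < lev μ part C A := by
  by_contra hc
  push_neg at hc
  exact h.not_subset (maxEvident_subset hμpos hmem hA hB hc)

lemma lt_lev_of_superEvident {μ : Ω → ℝ} {part : Fin 2 → Ω → Finset Ω}
    {p : ℝ} {C G : Finset Ω} (hG : G.Nonempty)
    (h : superEvidentInd μ part p C G) : p < lev μ part C G := by
  rw [lev_def μ part C hG]
  obtain ⟨x, hx, hEq⟩ := Finset.exists_mem_eq_inf' (hG.product Finset.univ_nonempty)
    (fun x => min (condP μ part x.2 G x.1) (condP μ part x.2 C x.1))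
  rw [hEq]
  rw [Finset.mem_product] at hx
  exact lt_min (h x.2 x.1 hx.1).1 (h x.2 x.1 hx.1).2

end Aux

/-- The collection of all maximally evident `C`-indicating events can be enumerated as a
strictly nested chain with strictly increasing `C`-evidence levels, in which each event is
the largest super-evident `C`-indicating subset of its predecessor. -/
theorem maxEvident_nested_chain [Fintype Ω] [DecidableEq Ω] [Nonempty Ω]
    (μ : Ω → ℝ) (part : Fin 2 → Ω → Finset Ω)
    (hμpos : ∀ ω : Ω, 0 < μ ω) (hμsum : ∑ ω : Ω, μ ω = 1)
    (hmem : ∀ (i : Fin 2) (ω : Ω), ω ∈ part i ω)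
    (hcell : ∀ (i : Fin 2) (ω ω' : Ω), ω' ∈ part i ω → part i ω' = part i ω)
    (C : Finset Ω) :
    ∃ (n : ℕ) (E : Fin n → Finset Ω),
      (∀ j : Fin n, isMaxEvident μ part C (E j)) ∧
      (∀ F : Finset Ω, isMaxEvident μ part C F → ∃ j : Fin n, F = E j) ∧
      (∀ j k : Fin n, j < k → E k ⊂ E j) ∧
      (∀ j k : Fin n, j < k → ∀ p q : ℝ,
        isEvidenceLevel μ part C (E j) p → isEvidenceLevel μ part C (E k) q → p < q) ∧
      (∀ j k : Fin n, (j : ℕ) + 1 = (k : ℕ) → isLargestSuperSub μ part C (E j) (E k)) := by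
  classical
  set Fam : Finset (Finset Ω) := univ.powerset.filter (fun A => isMaxEvident μ part C A)
    with hFamdef
  have hFamMem : ∀ A : Finset Ω, A ∈ Fam ↔ isMaxEvident μ part C A := by
    intro A; simp [hFamdef]
  set cs : Finset ℕ := Fam.image Finset.card with hcsdef
  set n := cs.card with hndef
  set iso := cs.orderIsoOfFin rfl with hisodef
  set cfn : Fin n → ℕ := fun j => (iso j.rev : ℕ) with hcfndef
  have hcmem : ∀ j, cfn j ∈ cs := fun j => (iso j.rev).2
  have hder : ∀ j, ∃! A, A ∈ Fam ∧ A.card = cfn j := by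
    intro j
    obtain ⟨A, hA, hAc⟩ := Finset.mem_image.mp (hcmem j)
    refine ⟨A, ⟨hA, hAc⟩, fun B hB => ?_⟩
    exact maxEvident_card_inj hμpos hmem ((hFamMem B).mp hB.1) ((hFamMem A).mp hA)
      (hB.2.trans hAc.symm)
  set Efn : Fin n → Finset Ω := fun j => Fam.choose (fun A => A.card = cfn j) (hder j) with hEfndef
  have hEmem : ∀ j, Efn j ∈ Fam := fun j => Finset.choose_mem _ _ _
  have hEcard : ∀ j, (Efn j).card = cfn j := fun j => Finset.choose_property (fun A => A.card = cfn j) Fam (hder j)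
  have hEmax : ∀ j, isMaxEvident μ part C (Efn j) := fun j => (hFamMem _).mp (hEmem j)
  have hEne : ∀ j, (Efn j).Nonempty := fun j => maxEvident_nonempty (hEmax j)
  -- surjectivity
  have hsurj : ∀ F : Finset Ω, isMaxEvident μ part C F → ∃ j, F = Efn j := by
    intro F hF
    have hFFam : F ∈ Fam := (hFamMem F).mpr hF
    have hFc : F.card ∈ cs := Finset.mem_image_of_mem _ hFFam
    refine ⟨(iso.symm ⟨F.card, hFc⟩).rev, ?_⟩
    have hc : cfn (iso.symm ⟨F.card, hFc⟩).rev = F.card := by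
      simp [hcfndef, Fin.rev_rev]
    exact maxEvident_card_inj hμpos hmem hF (hEmax _) (by rw [hEcard, hc])
  -- strict nesting
  have hcardlt : ∀ j k : Fin n, j < k → (Efn k).card < (Efn j).card := by
    intro j k hjk
    rw [hEcard, hEcard]
    have : iso k.rev < iso j.rev := iso.strictMono (Fin.rev_lt_rev.mpr hjk)
    exact this
  have hss : ∀ j k : Fin n, j < k → Efn k ⊂ Efn j := fun j k hjk =>
    maxEvident_ssubset_of_card_lt hμpos hmem (hEmax k) (hEmax j) (hcardlt j k hjk)
  have hlevlt : ∀ j k : Fin n, j < k → lev μ part C (Efn j) < lev μ part C (Efn k) :=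
    fun j k hjk => maxEvident_lev_lt_of_ssubset hμpos hmem (hEmax k) (hEmax j) (hss j k hjk)
  refine ⟨n, Efn, hEmax, hsurj, hss, ?_, ?_⟩
  · intro j k hjk p q hp hq
    rw [eq_lev_of_isEvidenceLevel hp, eq_lev_of_isEvidenceLevel hq]
    exact hlevlt j k hjk
  · intro j k hjk
    have hjk' : j < k := by
      rw [Fin.lt_def]; omega
    refine ⟨(hss j k hjk').subset, lev μ part C (Efn j),
      isEvidenceLevel_lev (hEne j), ?_, ?_⟩
    · intro i ω hω
      have hpek : pEvidentInd μ part (lev μ part C (Efn k)) C (Efn k) :=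
        (pEvidentInd_iff_le_lev (hEne k)).mpr le_rfl
      exact ⟨(hlevlt j k hjk').trans_le (hpek.1 i ω hω),
        (hlevlt j k hjk').trans_le (hpek.2 i ω hω)⟩
    · intro G hGsub hGsup
      rcases G.eq_empty_or_nonempty with rfl | hGne
      · exact Finset.empty_subset _
      have h1 : lev μ part C (Efn j) < lev μ part C G :=
        lt_lev_of_superEvident hGne hGsup
      obtain ⟨G', hG'sup, hle⟩ := exists_maxEvidentSup μ part hμpos hmem C hGne
      have hG'max : isMaxEvident μ part C G' := ⟨G, hGne, hG'sup⟩
      obtain ⟨m, hm⟩ := hsurj G' hG'max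
      have hjm : j < m := by
        by_contra hc
        push_neg at hc
        have h2 : lev μ part C (Efn m) ≤ lev μ part C (Efn j) := by
          rcases lt_or_eq_of_le hc with h | h
          · exact (hlevlt m j h).le
          · rw [h]
        rw [← hm] at h2
        linarith [h1.trans_le hle]
      have hkm : Efn m ⊆ Efn k := by
        have hkm' : k ≤ m := by
          rw [Fin.le_def]; omega
        rcases lt_or_eq_of_le hkm' with h | h
        · exact (hss k m h).subset
        · rw [h]
      calc G ⊆ G' := hG'sup.1
        _ = Efn m := hm
        _ ⊆ Efn k := hkm
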